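/- Let n ≥ 1 and let I be the two-sided ideal of the free (noncommutative) ring ℤ⟨x₁, x₂, x₃⟩ generated by x₁^{2n} − 1, x₂² − x₁x₂ − x₂, x₁x₂ − x₂x₁, x₃² − x₃, x₁x₃ − x₃, x₃x₁ − x₃, and x₃x₂ − 2x₃. Then the quotient ring ℤ⟨x₁, x₂, x₃⟩/I is a free ℤ-module of rank 4n + 2, the images of the monomials x₁^i x₂^j (0 ≤ i ≤ 2n−1, j ∈ {0,1}) together with x₃ and x₂x₃ forming a ℤ-basis; in particular the quotient ring is not commutative, since x₂x₃ ≠ x₃x₂ in it. -/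

import Mathlib

open FreeAlgebra

/-- The relations cutting out the two-sided ideal
`I = (x₁^{2n} - 1, x₂² - x₁x₂ - x₂, x₁x₂ - x₂x₁, x₃² - x₃, x₁x₃ - x₃, x₃x₁ - x₃, x₃x₂ - 2x₃)`
of the free ring `ℤ⟨x₁, x₂, x₃⟩`; quotienting by this relation is quotienting by `I`. -/
inductive greenRel (n : ℕ) : FreeAlgebra ℤ (Fin 3) → FreeAlgebra ℤ (Fin 3) → Prop
  | r1 : greenRel n (ι ℤ 0 ^ (2 * n)) 1
  | r2 : greenRel n (ι ℤ 1 ^ 2) (ι ℤ 0 * ι ℤ 1 + ι ℤ 1)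
  | r3 : greenRel n (ι ℤ 0 * ι ℤ 1) (ι ℤ 1 * ι ℤ 0)
  | r4 : greenRel n (ι ℤ 2 ^ 2) (ι ℤ 2)
  | r5 : greenRel n (ι ℤ 0 * ι ℤ 2) (ι ℤ 2)
  | r6 : greenRel n (ι ℤ 2 * ι ℤ 0) (ι ℤ 2)
  | r7 : greenRel n (ι ℤ 2 * ι ℤ 1) (2 * ι ℤ 2)

namespace GreenAux

open Polynomial

noncomputable section

variable (n : ℕ)

/-! ### A concrete model: `R0 = ℤ[x]/(x^{2n}-1)[y]/(y² - (x+1)y)` and `2×2` matrices -/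

abbrev p1 : ℤ[X] := X ^ (2 * n) - C 1

abbrev R1 := AdjoinRoot (p1 n)

abbrev a1 : R1 n := AdjoinRoot.root _

abbrev p2 : (R1 n)[X] := X * (X - C (a1 n + 1))

abbrev R0 := AdjoinRoot (p2 n)

abbrev T := R0 n × Matrix (Fin 2) (Fin 2) ℤ

lemma hp1 (hn : 1 ≤ n) : (p1 n).Monic := monic_X_pow_sub_C 1 (by omega)

lemma hp2 : (p2 n).Monic := monic_X.mul (monic_X_sub_C _)

lemma dim1 : (p1 n).natDegree = 2 * n := natDegree_X_pow_sub_C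

lemma nontrivialR1 (hn : 1 ≤ n) : Nontrivial (R1 n) := by
  refine AdjoinRoot.nontrivial _ ?_
  rw [degree_X_pow_sub_C (by omega : 0 < 2*n)]
  exact_mod_cast (by omega : 2*n ≠ 0)

lemma dim2 (hn : 1 ≤ n) : (p2 n).natDegree = 2 := by
  have := nontrivialR1 n hn
  rw [monic_X.natDegree_mul (monic_X_sub_C _), natDegree_X, natDegree_X_sub_C]

def b1 (hn : 1 ≤ n) : Module.Basis (Fin (2*n)) ℤ (R1 n) :=
  (AdjoinRoot.powerBasis' (hp1 n hn)).basis.reindex (finCongr (dim1 n))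

def b2 (hn : 1 ≤ n) : Module.Basis (Fin 2) (R1 n) (R0 n) :=
  (AdjoinRoot.powerBasis' (hp2 n)).basis.reindex (finCongr (dim2 n hn))

def bR0 (hn : 1 ≤ n) : Module.Basis (Fin (2*n) × Fin 2) ℤ (R0 n) :=
  (b1 n hn).smulTower (b2 n hn)

abbrev a0 : R0 n := algebraMap (R1 n) (R0 n) (a1 n)

abbrev y0 : R0 n := AdjoinRoot.root (p2 n)

lemma bR0_apply (hn : 1 ≤ n) (i : Fin (2*n)) (j : Fin 2) :
    bR0 n hn (i, j) = a0 n ^ (i : ℕ) * y0 n ^ (j : ℕ) := by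
  rw [bR0, Module.Basis.smulTower_apply]
  simp only [b1, b2, Module.Basis.reindex_apply, PowerBasis.basis_eq_pow,
    AdjoinRoot.powerBasis'_gen, Algebra.smul_def, map_pow]
  congr 2

lemma ha1 : a1 n ^ (2 * n) = 1 := by
  have h := AdjoinRoot.eval₂_root (p1 n)
  simp only [p1, eval₂_sub, eval₂_X_pow, eval₂_C, eval₂_one, map_one] at h
  linear_combination h

lemma hy0 : y0 n ^ 2 = a0 n * y0 n + y0 n := by
  have h := AdjoinRoot.eval₂_root (p2 n)
  simp only [p2, eval₂_mul, eval₂_sub, eval₂_X, eval₂_C] at h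
  rw [← AdjoinRoot.algebraMap_eq] at h
  simp only [map_add, map_one] at h
  linear_combination h

abbrev Bm : Matrix (Fin 2) (Fin 2) ℤ := !![0,0;1,2]
abbrev Cm : Matrix (Fin 2) (Fin 2) ℤ := !![1,2;0,0]

lemma mBB : Bm * Bm = 1 * Bm + Bm := by
  ext i j; fin_cases i <;> fin_cases j <;>
    norm_num [Matrix.mul_apply, Fin.sum_univ_two, Matrix.add_apply, Matrix.one_apply]

lemma mCC : Cm * Cm = Cm := by
  ext i j; fin_cases i <;> fin_cases j <;>
    norm_num [Matrix.mul_apply, Fin.sum_univ_two, Matrix.add_apply, Matrix.one_apply]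

lemma mCB : Cm * Bm = 2 * Cm := by
  rw [show (2 : Matrix (Fin 2) (Fin 2) ℤ) = 1 + 1 from one_add_one_eq_two.symm, add_mul, one_mul]
  ext i j; fin_cases i <;> fin_cases j <;>
    norm_num [Matrix.mul_apply, Fin.sum_univ_two, Matrix.add_apply, Matrix.one_apply]

lemma mBC : Bm * Cm = Bm := by
  ext i j; fin_cases i <;> fin_cases j <;>
    norm_num [Matrix.mul_apply, Fin.sum_univ_two, Matrix.add_apply, Matrix.one_apply]

/-! ### The evaluation homomorphism -/

def fT : Fin 3 → T n := ![(a0 n, 1), (y0 n, Bm), (0, Cm)]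

def F : FreeAlgebra ℤ (Fin 3) →ₐ[ℤ] T n := FreeAlgebra.lift ℤ (fT n)

lemma F0 : F n (ι ℤ 0) = (a0 n, 1) := by simp [F, fT, lift_ι_apply]
lemma F1 : F n (ι ℤ 1) = (y0 n, Bm) := by simp [F, fT, lift_ι_apply]
lemma F2 : F n (ι ℤ 2) = (0, Cm) := by simp [F, fT, lift_ι_apply]

lemma hrel : ∀ ⦃x y⦄, greenRel n x y → F n x = F n y := by
  have e0 := F0 n
  have e1 := F1 n
  have e2 := F2 n
  intro x y h
  cases h with
  | r1 =>
      rw [map_pow, map_one, e0]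
      refine Prod.ext ?_ ?_
      · show (a0 n) ^ (2*n) = 1
        rw [← map_pow, ha1, map_one]
      · show (1 : Matrix (Fin 2) (Fin 2) ℤ) ^ (2*n) = 1
        exact one_pow _
  | r2 =>
      rw [map_pow, map_add, map_mul, e0, e1]
      refine Prod.ext ?_ ?_
      · show (y0 n) ^ 2 = a0 n * y0 n + y0 n
        exact hy0 n
      · show Bm ^ 2 = 1 * Bm + Bm
        rw [sq]; exact mBB
  | r3 =>
      rw [map_mul, map_mul, e0, e1]
      refine Prod.ext ?_ ?_
      · show a0 n * y0 n = y0 n * a0 n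
        exact mul_comm _ _
      · show (1 : Matrix (Fin 2) (Fin 2) ℤ) * Bm = Bm * 1
        rw [one_mul, mul_one]
  | r4 =>
      rw [map_pow, e2]
      refine Prod.ext ?_ ?_
      · show (0 : R0 n) ^ 2 = 0
        simp
      · show Cm ^ 2 = Cm
        rw [sq]; exact mCC
  | r5 =>
      rw [map_mul, e0, e2]
      refine Prod.ext ?_ ?_
      · show a0 n * 0 = 0
        simp
      · show (1 : Matrix (Fin 2) (Fin 2) ℤ) * Cm = Cm
        rw [one_mul]
  | r6 =>
      rw [map_mul, e0, e2]
      refine Prod.ext ?_ ?_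
      · show (0 : R0 n) * a0 n = 0
        simp
      · show Cm * 1 = Cm
        rw [mul_one]
  | r7 =>
      rw [map_mul, map_mul, map_ofNat, e1, e2]
      refine Prod.ext ?_ ?_
      · show (0 : R0 n) * y0 n = (2 : T n).1 * 0
        simp
      · show Cm * Bm = (2 : T n).2 * Cm
        exact mCB

abbrev Q := RingQuot (greenRel n)

def Φ : Q n →+* T n :=
  RingQuot.lift ⟨(F n).toRingHom, hrel n⟩

lemma Φ_mk (z : FreeAlgebra ℤ (Fin 3)) :
    Φ n (RingQuot.mkRingHom (greenRel n) z) = F n z :=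
  RingQuot.lift_mkRingHom_apply _ _ _

/-! ### The quotient side -/

abbrev qA : Q n := RingQuot.mkRingHom (greenRel n) (ι ℤ 0)
abbrev qB : Q n := RingQuot.mkRingHom (greenRel n) (ι ℤ 1)
abbrev qC : Q n := RingQuot.mkRingHom (greenRel n) (ι ℤ 2)

lemma rel1 : qA n ^ (2 * n) = 1 := by
  have := RingQuot.mkRingHom_rel (greenRel.r1 (n := n))
  simpa [map_pow] using this

lemma rel2 : qB n ^ 2 = qA n * qB n + qB n := by
  have := RingQuot.mkRingHom_rel (greenRel.r2 (n := n))
  simpa [map_pow, map_mul, map_add] using this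

lemma rel3 : qA n * qB n = qB n * qA n := by
  have := RingQuot.mkRingHom_rel (greenRel.r3 (n := n))
  simpa [map_mul] using this

lemma rel4 : qC n ^ 2 = qC n := by
  have := RingQuot.mkRingHom_rel (greenRel.r4 (n := n))
  simpa [map_pow] using this

lemma rel5 : qA n * qC n = qC n := by
  have := RingQuot.mkRingHom_rel (greenRel.r5 (n := n))
  simpa [map_mul] using this

lemma rel6 : qC n * qA n = qC n := by
  have := RingQuot.mkRingHom_rel (greenRel.r6 (n := n))
  simpa [map_mul] using this

lemma rel7 : qC n * qB n = 2 * qC n := by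
  have := RingQuot.mkRingHom_rel (greenRel.r7 (n := n))
  simpa [map_mul, map_ofNat] using this

abbrev ix := (Fin (2 * n) × Fin 2) ⊕ Fin 2

def vv : ix n → Q n :=
  Sum.elim (fun p => qA n ^ (p.1 : ℕ) * qB n ^ (p.2 : ℕ)) ![qC n, qB n * qC n]

abbrev MM : Submodule ℤ (Q n) := Submodule.span ℤ (Set.range (vv n))

variable {n}

lemma mem_MM_of_pow (hn : 1 ≤ n) (k : ℕ) (j : Fin 2) : qA n ^ k * qB n ^ (j : ℕ) ∈ MM n := by
  have h2n : 0 < 2 * n := by omega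
  have : qA n ^ k = qA n ^ (k % (2 * n)) := pow_eq_pow_mod k (rel1 n)
  rw [this]
  exact Submodule.subset_span ⟨Sum.inl (⟨k % (2*n), Nat.mod_lt _ h2n⟩, j), rfl⟩

lemma qC_mem : qC n ∈ MM n := Submodule.subset_span ⟨Sum.inr 0, rfl⟩

lemma qBC_mem : qB n * qC n ∈ MM n := Submodule.subset_span ⟨Sum.inr 1, rfl⟩

lemma commBA (i : ℕ) : qB n * qA n ^ i = qA n ^ i * qB n :=
  (Commute.pow_right ((rel3 n).symm) i).eq

lemma qCA (i : ℕ) : qC n * qA n ^ i = qC n := by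
  induction i with
  | zero => simp
  | succ k ih => rw [pow_succ, ← mul_assoc, ih, rel6]

lemma mulA_mem (hn : 1 ≤ n) (x : Q n) (hx : x ∈ Set.range (vv n)) : qA n * x ∈ MM n := by
  obtain ⟨i, rfl⟩ := hx
  rcases i with p | k
  · obtain ⟨i, j⟩ := p
    show qA n * (qA n ^ (i:ℕ) * qB n ^ (j:ℕ)) ∈ MM n
    rw [← mul_assoc, ← pow_succ']
    exact mem_MM_of_pow hn _ _
  · fin_cases k
    · show qA n * qC n ∈ MM n
      rw [rel5]; exact qC_mem
    · show qA n * (qB n * qC n) ∈ MM n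
      rw [← mul_assoc, rel3, mul_assoc, rel5]
      exact qBC_mem

lemma mulB_mem (hn : 1 ≤ n) (x : Q n) (hx : x ∈ Set.range (vv n)) : qB n * x ∈ MM n := by
  obtain ⟨i, rfl⟩ := hx
  rcases i with p | k
  · obtain ⟨i, j⟩ := p
    show qB n * (qA n ^ (i:ℕ) * qB n ^ (j:ℕ)) ∈ MM n
    rw [← mul_assoc, commBA, mul_assoc]
    fin_cases j
    · show qA n ^ (i:ℕ) * (qB n * qB n ^ ((0:ℕ))) ∈ MM n
      simpa using mem_MM_of_pow hn i 1
    · show qA n ^ (i:ℕ) * (qB n * qB n ^ ((1:ℕ))) ∈ MM n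
      rw [pow_one, ← sq, rel2, mul_add, ← mul_assoc, ← pow_succ]
      refine Submodule.add_mem _ ?_ ?_
      · simpa using mem_MM_of_pow hn (i+1) 1
      · simpa using mem_MM_of_pow hn i 1
  · fin_cases k
    · show qB n * qC n ∈ MM n
      exact qBC_mem
    · show qB n * (qB n * qC n) ∈ MM n
      rw [← mul_assoc, ← sq, rel2, add_mul, mul_assoc]
      exact Submodule.add_mem _ (mulA_mem hn _ ⟨Sum.inr 1, rfl⟩) qBC_mem

lemma mulC_mem (hn : 1 ≤ n) (x : Q n) (hx : x ∈ Set.range (vv n)) : qC n * x ∈ MM n := by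
  obtain ⟨i, rfl⟩ := hx
  rcases i with p | k
  · obtain ⟨i, j⟩ := p
    show qC n * (qA n ^ (i:ℕ) * qB n ^ (j:ℕ)) ∈ MM n
    rw [← mul_assoc, qCA]
    fin_cases j
    · simpa using qC_mem
    · show qC n * qB n ^ ((1:ℕ)) ∈ MM n
      rw [pow_one, rel7, two_mul]
      exact Submodule.add_mem _ qC_mem qC_mem
  · fin_cases k
    · show qC n * qC n ∈ MM n
      rw [← sq, rel4]; exact qC_mem
    · show qC n * (qB n * qC n) ∈ MM n
      rw [← mul_assoc, rel7, mul_assoc, ← sq, rel4, two_mul]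
      exact Submodule.add_mem _ qC_mem qC_mem

lemma mul_span (g : Q n) (h : ∀ x ∈ Set.range (vv n), g * x ∈ MM n) :
    ∀ m ∈ MM n, g * m ∈ MM n := by
  intro m hm
  induction hm using Submodule.span_induction with
  | mem x hx => exact h x hx
  | zero => simpa using (MM n).zero_mem
  | add x y _ _ hx hy => rw [mul_add]; exact Submodule.add_mem _ hx hy
  | smul a x _ hx => rw [mul_smul_comm]; exact Submodule.smul_mem _ _ hx

lemma mul_mem_MM (hn : 1 ≤ n) (z : FreeAlgebra ℤ (Fin 3)) :
    ∀ m ∈ MM n, RingQuot.mkRingHom (greenRel n) z * m ∈ MM n := by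
  induction z using FreeAlgebra.induction with
  | grade0 r =>
      intro m hm
      have h1 : RingQuot.mkRingHom (greenRel n) (algebraMap ℤ _ r) = (r : Q n) := by
        exact (congrArg _ (eq_intCast (algebraMap ℤ (FreeAlgebra ℤ (Fin 3))) r)).trans (map_intCast _ r)
      rw [h1, ← zsmul_eq_mul]
      exact Submodule.smul_mem _ _ hm
  | grade1 i =>
      fin_cases i
      · exact mul_span _ (mulA_mem hn)
      · exact mul_span _ (mulB_mem hn)
      · exact mul_span _ (mulC_mem hn)
  | mul a b ha hb =>
      intro m hm
      rw [map_mul, mul_assoc]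
      exact ha _ (hb _ hm)
  | add a b ha hb =>
      intro m hm
      rw [map_add, add_mul]
      exact Submodule.add_mem _ (ha _ hm) (hb _ hm)

lemma MM_eq_top (hn : 1 ≤ n) : MM n = ⊤ := by
  refine eq_top_iff.2 fun y _ => ?_
  obtain ⟨z, rfl⟩ := RingQuot.mkRingHom_surjective (greenRel n) y
  have h1 : (1 : Q n) ∈ MM n := by
    have : vv n (Sum.inl (⟨0, by omega⟩, 0)) = 1 := by simp [vv]
    rw [← this]
    exact Submodule.subset_span ⟨_, rfl⟩
  simpa using mul_mem_MM hn z 1 h1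

/-! ### Linear independence -/

lemma Φv_inl (hn : 1 ≤ n) (p : Fin (2*n) × Fin 2) :
    Φ n (vv n (Sum.inl p)) = (bR0 n hn p, Bm ^ (p.2 : ℕ)) := by
  obtain ⟨i, j⟩ := p
  show Φ n (qA n ^ (i:ℕ) * qB n ^ (j:ℕ)) = _
  rw [map_mul, map_pow, map_pow, Φ_mk, Φ_mk, F0, F1, bR0_apply]
  refine Prod.ext ?_ ?_
  · show a0 n ^ (i:ℕ) * y0 n ^ (j:ℕ) = _
    rfl
  · show (1 : Matrix (Fin 2) (Fin 2) ℤ) ^ (i:ℕ) * Bm ^ (j:ℕ) = Bm ^ (j:ℕ)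
    rw [one_pow, one_mul]

lemma Φv_inr0 : Φ n (vv n (Sum.inr 0)) = (0, Cm) := by
  show Φ n (qC n) = _
  rw [Φ_mk, F2]

lemma Φv_inr1 : Φ n (vv n (Sum.inr 1)) = (0, Bm) := by
  show Φ n (qB n * qC n) = _
  rw [map_mul, Φ_mk, Φ_mk, F1, F2]
  refine Prod.ext ?_ ?_
  · show y0 n * 0 = 0
    simp
  · show Bm * Cm = Bm
    exact mBC

lemma li (hn : 1 ≤ n) : LinearIndependent ℤ (vv n) := by
  have ΦL : Q n →ₗ[ℤ] T n := (Φ n).toAddMonoidHom.toIntLinearMap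
  refine LinearIndependent.of_comp ((Φ n).toAddMonoidHom.toIntLinearMap) ?_
  rw [Fintype.linearIndependent_iff]
  intro g hg
  have hval : ∀ i, (Φ n).toAddMonoidHom.toIntLinearMap (vv n i) = Φ n (vv n i) := fun _ => rfl
  simp only [Function.comp_apply, hval] at hg
  rw [Fintype.sum_sum_type, Fin.sum_univ_two] at hg
  simp only [Φv_inl hn, Φv_inr0, Φv_inr1] at hg
  -- first components
  have hfst := congrArg Prod.fst hg
  simp only [Prod.fst_sum, Prod.fst_add, Prod.smul_fst, Prod.fst_zero, smul_zero, add_zero] at hfst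
  have hinl : ∀ p, g (Sum.inl p) = 0 := by
    have := Fintype.linearIndependent_iff.mp (bR0 n hn).linearIndependent (fun p => g (Sum.inl p))
    exact this hfst
  -- second components
  have hsnd := congrArg Prod.snd hg
  simp only [Prod.snd_sum, Prod.snd_add, Prod.smul_snd, Prod.snd_zero, hinl, zero_smul,
    Finset.sum_const_zero, zero_add] at hsnd
  have h00 := congrFun (congrFun hsnd 0) 0
  have h10 := congrFun (congrFun hsnd 1) 0
  simp only [Matrix.add_apply, Matrix.smul_apply, Matrix.zero_apply, smul_eq_mul] at h00 h10
  norm_num at h00 h10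
  intro i
  rcases i with p | k
  · exact hinl p
  · fin_cases k
    · exact h00
    · exact h10

end

end GreenAux


open GreenAux in
/-- the quotient `ℤ⟨x₁,x₂,x₃⟩/I` is a free `ℤ`-module of rank `4n + 2`,
with basis the images of `x₁^i x₂^j` (`0 ≤ i ≤ 2n-1`, `j ∈ {0,1}`) together with `x₃` and
`x₂x₃`; in particular it is not commutative, since `x₂x₃ ≠ x₃x₂` in it. -/
theorem stmt_14 (n : ℕ) (hn : 1 ≤ n) :
    Module.Free ℤ (RingQuot (greenRel n)) ∧
    Module.rank ℤ (RingQuot (greenRel n)) = 4 * n + 2 ∧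
    (∃ B : Module.Basis ((Fin (2 * n) × Fin 2) ⊕ Fin 2) ℤ (RingQuot (greenRel n)),
      (∀ p : Fin (2 * n) × Fin 2,
        B (Sum.inl p) = RingQuot.mkRingHom (greenRel n)
          (ι ℤ 0 ^ (p.1 : ℕ) * ι ℤ 1 ^ (p.2 : ℕ))) ∧
      B (Sum.inr 0) = RingQuot.mkRingHom (greenRel n) (ι ℤ 2) ∧
      B (Sum.inr 1) = RingQuot.mkRingHom (greenRel n) (ι ℤ 1 * ι ℤ 2)) ∧
    RingQuot.mkRingHom (greenRel n) (ι ℤ 1) * RingQuot.mkRingHom (greenRel n) (ι ℤ 2)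
      ≠ RingQuot.mkRingHom (greenRel n) (ι ℤ 2) * RingQuot.mkRingHom (greenRel n) (ι ℤ 1) := by
  classical
  let B : Module.Basis (ix n) ℤ (Q n) := Module.Basis.mk (li hn) (MM_eq_top hn).ge
  refine ⟨Module.Free.of_basis B, ?_, ⟨B, ?_, ?_, ?_⟩, ?_⟩
  · rw [rank_eq_card_basis B]
    have : Fintype.card (ix n) = 4 * n + 2 := by
      simp [ix]; ring
    rw [this]
    push_cast
    ring
  · intro p
    show B (Sum.inl p) = _
    rw [Module.Basis.mk_apply]
    show qA n ^ (p.1 : ℕ) * qB n ^ (p.2 : ℕ) = _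
    rw [map_mul, map_pow, map_pow]
  · show B (Sum.inr 0) = _
    rw [Module.Basis.mk_apply]
    rfl
  · show B (Sum.inr 1) = _
    rw [Module.Basis.mk_apply]
    show qB n * qC n = _
    rw [map_mul]
  · intro h
    have h2 := congrArg (Φ n) h
    rw [map_mul, map_mul, Φ_mk, Φ_mk, F1, F2] at h2
    have h3 := congrArg Prod.snd h2
    have h4 : Bm * Cm = Cm * Bm := h3
    rw [mBC] at h4
    have h5 := congrFun (congrFun h4 1) 0
    norm_num [Matrix.mul_apply, Fin.sum_univ_two] at h5
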